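/- Let Q_1, …, Q_N be d×d Hermitian unitary complex matrices, p_1, …, p_N ∈ [0, 1] with p = max_i p_i, ρ a density matrix, and O a d×d complex matrix with ‖O‖ ≤ 1. For g ∈ ℝ define f(g) = Tr(ρ · (N_N^{(g)} ∘ ⋯ ∘ N_1^{(g)})(O)) with N_i^{(g)}(A) = (1 − g p_i) A + g p_i Q_i A Q_i. Let K ≥ 0 with K + 1 ≤ N, let g_0, …, g_K be pairwise distinct positive reals, and let β_ℓ = ∏_{m ≠ ℓ} g_m / (g_m − g_ℓ). Then |∑_{ℓ=0}^{K} β_ℓ f(g_ℓ) − Tr(ρ O)| ≤ ∑_{k=K+1}^{N} Γ_k · binom(N, k) · (2p)^k, where Γ_k = |∑_{ℓ=0}^{K} β_ℓ g_ℓ^k|. -/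

import Mathlib

open Matrix
open scoped Matrix.Norms.L2Operator ComplexOrder

namespace ZNEaux

lemma norm_one_le' {d : ℕ} : ‖(1 : Matrix (Fin d) (Fin d) ℂ)‖ ≤ 1 := by
  have h2 := Matrix.l2_opNorm_conjTranspose_mul_self (1 : Matrix (Fin d) (Fin d) ℂ)
  simp only [conjTranspose_one, mul_one] at h2
  nlinarith [norm_nonneg (1 : Matrix (Fin d) (Fin d) ℂ)]

lemma unitary_norm_le {d : ℕ} (U : Matrix (Fin d) (Fin d) ℂ) (h : Uᴴ * U = 1) : ‖U‖ ≤ 1 := by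
  have h1 : ‖U‖ * ‖U‖ = ‖(1 : Matrix (Fin d) (Fin d) ℂ)‖ := by
    rw [← Matrix.l2_opNorm_conjTranspose_mul_self, h]
  nlinarith [norm_nonneg U, norm_one_le' (d := d)]

lemma entry_abs_le {d : ℕ} (B : Matrix (Fin d) (Fin d) ℂ) (i j : Fin d) :
    ‖B i j‖ ≤ ‖B‖ := by
  set x : EuclideanSpace ℂ (Fin d) := EuclideanSpace.single j (1:ℂ) with hx
  have h1 := B.l2_opNorm_mulVec x
  have hxn : ‖x‖ = 1 := by simp [hx, EuclideanSpace.norm_single]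
  set y : EuclideanSpace ℂ (Fin d) := (EuclideanSpace.equiv (Fin d) ℂ).symm (B *ᵥ x) with hy
  have hyi : y i = B i j := by
    show (B *ᵥ (x : Fin d → ℂ)) i = B i j
    have hxp : (x : Fin d → ℂ) = Pi.single j 1 := by
      ext a; simp [hx, EuclideanSpace.single_apply, Pi.single_apply, eq_comm]
    rw [hxp, Matrix.mulVec_single]; simp
  have h2 : ‖y i‖ ≤ ‖y‖ := by
    have := norm_inner_le_norm (𝕜 := ℂ) (EuclideanSpace.single i (1:ℂ)) y
    rw [EuclideanSpace.inner_single_left] at this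
    simpa using this
  rw [hyi] at h2
  calc ‖B i j‖ ≤ ‖y‖ := h2
    _ ≤ ‖B‖ * ‖x‖ := h1
    _ = ‖B‖ := by rw [hxn, mul_one]

lemma trace_mul_abs_le {d : ℕ} (ρ M : Matrix (Fin d) (Fin d) ℂ)
    (hρ : ρ.PosSemidef) (hρtr : ρ.trace = 1) : ‖(ρ * M).trace‖ ≤ ‖M‖ := by
  have hH : ρ.IsHermitian := hρ.1
  set U : Matrix (Fin d) (Fin d) ℂ := (hH.eigenvectorUnitary : Matrix (Fin d) (Fin d) ℂ) with hU
  have hU1 : Uᴴ * U = 1 := by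
    rw [← Matrix.star_eq_conjTranspose]
    exact Matrix.mem_unitaryGroup_iff'.mp hH.eigenvectorUnitary.2
  have hU2 : U * Uᴴ = 1 := by
    rw [← Matrix.star_eq_conjTranspose]
    exact Matrix.mem_unitaryGroup_iff.mp hH.eigenvectorUnitary.2
  set lam := hH.eigenvalues with hlam
  set D : Matrix (Fin d) (Fin d) ℂ := diagonal (RCLike.ofReal ∘ lam) with hD
  have hspec : ρ = U * D * Uᴴ := by
    rw [← Matrix.star_eq_conjTranspose]; exact hH.spectral_theorem
  set A := Uᴴ * M * U with hA
  have key : ∀ X : Matrix (Fin d) (Fin d) ℂ,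
      (ρ * X).trace = ∑ i, (lam i : ℂ) * (Uᴴ * X * U) i i := by
    intro X
    rw [hspec, show U * D * Uᴴ * X = U * (D * Uᴴ * X) from by simp only [mul_assoc],
      Matrix.trace_mul_comm]
    simp [Matrix.trace, Matrix.diag, Matrix.diagonal_mul, hD, mul_assoc]
  have hUn : ‖U‖ ≤ 1 := unitary_norm_le U hU1
  have hUHn : ‖Uᴴ‖ ≤ 1 := by rw [Matrix.l2_opNorm_conjTranspose]; exact hUn
  have hAn : ‖A‖ ≤ ‖M‖ := by
    calc ‖A‖ ≤ ‖Uᴴ * M‖ * ‖U‖ := Matrix.l2_opNorm_mul _ _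
      _ ≤ ‖Uᴴ‖ * ‖M‖ * ‖U‖ := by
          have := Matrix.l2_opNorm_mul Uᴴ M
          have h0 := norm_nonneg U
          nlinarith [norm_nonneg (Uᴴ * M), norm_nonneg M, norm_nonneg Uᴴ]
      _ ≤ ‖M‖ * ‖U‖ := mul_le_mul_of_nonneg_right
            (mul_le_of_le_one_left (norm_nonneg M) hUHn) (norm_nonneg U)
      _ ≤ ‖M‖ := mul_le_of_le_one_right (norm_nonneg M) hUn
  have hlam_nonneg : ∀ i, 0 ≤ lam i := fun i => hρ.eigenvalues_nonneg i
  have hlam_sum : ∑ i, lam i = 1 := by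
    have h1 : (ρ.trace : ℂ) = ∑ i, (lam i : ℂ) := by
      have := key 1
      simpa [Matrix.mul_one, hU1] using this
    have : ((∑ i, lam i : ℝ) : ℂ) = 1 := by push_cast; rw [← h1, hρtr]
    exact_mod_cast this
  rw [key M]
  calc ‖∑ i, (lam i : ℂ) * A i i‖
      ≤ ∑ i, ‖(lam i : ℂ) * A i i‖ := norm_sum_le _ _
    _ ≤ ∑ i, lam i * ‖M‖ := by
        apply Finset.sum_le_sum
        intro i _
        rw [norm_mul, Complex.norm_real, Real.norm_eq_abs, abs_of_nonneg (hlam_nonneg i)]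
        have h3 : ‖A i i‖ ≤ ‖M‖ := by
          exact (entry_abs_le A i i).trans hAn
        exact mul_le_mul_of_nonneg_left h3 (hlam_nonneg i)
    _ = ‖M‖ := by rw [← Finset.sum_mul, hlam_sum, one_mul]

variable {d N : ℕ}

noncomputable def applyD (Q : Fin N → Matrix (Fin d) (Fin d) ℂ) (S : List (Fin N))
    (A : Matrix (Fin d) (Fin d) ℂ) : Matrix (Fin d) (Fin d) ℂ :=
  S.foldl (fun B i => Q i * B * Q i - B) A

@[simp] lemma applyD_nil (Q : Fin N → Matrix (Fin d) (Fin d) ℂ) (A) :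
    applyD Q [] A = A := rfl

lemma applyD_cons (Q : Fin N → Matrix (Fin d) (Fin d) ℂ) (i S A) :
    applyD Q (i :: S) A = applyD Q S (Q i * A * Q i - A) := rfl

lemma applyD_add (Q : Fin N → Matrix (Fin d) (Fin d) ℂ) (S : List (Fin N)) :
    ∀ A B, applyD Q S (A + B) = applyD Q S A + applyD Q S B := by
  induction S with
  | nil => intro A B; simp
  | cons i S ih =>
    intro A B
    rw [applyD_cons, applyD_cons, applyD_cons, ← ih]
    congr 1
    noncomm_ring

lemma applyD_smul (Q : Fin N → Matrix (Fin d) (Fin d) ℂ) (S : List (Fin N)) (c : ℂ) :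
    ∀ A, applyD Q S (c • A) = c • applyD Q S A := by
  induction S with
  | nil => intro A; simp
  | cons i S ih =>
    intro A
    rw [applyD_cons, applyD_cons, ← ih]
    congr 1
    rw [Matrix.mul_smul, Matrix.smul_mul, smul_sub]

lemma applyD_norm (Q : Fin N → Matrix (Fin d) (Fin d) ℂ) (hQ : ∀ i, ‖Q i‖ ≤ 1)
    (S : List (Fin N)) : ∀ A, ‖applyD Q S A‖ ≤ 2 ^ S.length * ‖A‖ := by
  induction S with
  | nil => intro A; simp
  | cons i S ih =>
    intro A
    rw [applyD_cons]
    calc ‖applyD Q S (Q i * A * Q i - A)‖ ≤ 2 ^ S.length * ‖Q i * A * Q i - A‖ := ih _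
      _ ≤ 2 ^ S.length * (2 * ‖A‖) := by
          apply mul_le_mul_of_nonneg_left _ (by positivity)
          have h1 : ‖Q i * A * Q i‖ ≤ ‖A‖ := by
            calc ‖Q i * A * Q i‖ ≤ ‖Q i * A‖ * ‖Q i‖ := Matrix.l2_opNorm_mul _ _
              _ ≤ ‖Q i * A‖ := mul_le_of_le_one_right (norm_nonneg _) (hQ i)
              _ ≤ ‖Q i‖ * ‖A‖ := Matrix.l2_opNorm_mul _ _
              _ ≤ ‖A‖ := mul_le_of_le_one_left (norm_nonneg _) (hQ i)
          calc ‖Q i * A * Q i - A‖ ≤ ‖Q i * A * Q i‖ + ‖A‖ := norm_sub_le _ _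
            _ ≤ 2 * ‖A‖ := by linarith
      _ = 2 ^ (i :: S).length * ‖A‖ := by rw [List.length_cons]; ring

noncomputable def T (Q : Fin N → Matrix (Fin d) (Fin d) ℂ) (p : Fin N → ℝ) (k : ℕ)
    (L : List (Fin N)) (A : Matrix (Fin d) (Fin d) ℂ) : Matrix (Fin d) (Fin d) ℂ :=
  ((List.sublistsLen k L).map (fun S => (((S.map p).prod : ℝ) : ℂ) • applyD Q S A)).sum

lemma T_zero (Q : Fin N → Matrix (Fin d) (Fin d) ℂ) (p L A) : T Q p 0 L A = A := by
  simp [T]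

lemma T_gt (Q : Fin N → Matrix (Fin d) (Fin d) ℂ) (p k L A) (h : L.length < k) :
    T Q p k L A = 0 := by
  simp [T, List.sublistsLen_of_length_lt h]

lemma list_sum_map_add {α : Type*} (l : List α) (f g : α → Matrix (Fin d) (Fin d) ℂ) :
    (l.map (fun a => f a + g a)).sum = (l.map f).sum + (l.map g).sum := by
  induction l with
  | nil => simp
  | cons a l ih => simp [ih]; abel

lemma T_addsmul (Q : Fin N → Matrix (Fin d) (Fin d) ℂ) (p : Fin N → ℝ) (k : ℕ)
    (L : List (Fin N)) (A B : Matrix (Fin d) (Fin d) ℂ) (c : ℂ) :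
    T Q p k L (A + c • B) = T Q p k L A + c • T Q p k L B := by
  unfold T
  rw [show (fun S => (((S.map p).prod : ℝ) : ℂ) • applyD Q S (A + c • B))
      = fun S => (((S.map p).prod : ℝ) : ℂ) • applyD Q S A
        + c • ((((S.map p).prod : ℝ) : ℂ) • applyD Q S B) from ?_]
  · rw [list_sum_map_add]
    congr 1
    rw [List.smul_sum, List.map_map]
    rfl
  · funext S
    rw [applyD_add, applyD_smul, smul_add, smul_comm]

lemma T_succ_cons (Q : Fin N → Matrix (Fin d) (Fin d) ℂ) (p : Fin N → ℝ) (k : ℕ)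
    (i : Fin N) (L : List (Fin N)) (A : Matrix (Fin d) (Fin d) ℂ) :
    T Q p (k+1) (i :: L) A
      = T Q p (k+1) L A + (p i : ℂ) • T Q p k L (Q i * A * Q i - A) := by
  unfold T
  rw [List.sublistsLen_succ_cons, List.map_append, List.sum_append]
  congr 1
  rw [List.map_map, List.smul_sum, List.map_map]
  apply congrArg List.sum
  apply List.map_congr_left
  intro S _
  show (((i :: S).map p).prod : ℂ) • applyD Q (i :: S) A
      = (p i : ℂ) • ((((S.map p).prod : ℝ) : ℂ) • applyD Q S (Q i * A * Q i - A))
  rw [List.map_cons, List.prod_cons, applyD_cons, smul_smul]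
  push_cast
  ring_nf

lemma expand (Q : Fin N → Matrix (Fin d) (Fin d) ℂ) (p : Fin N → ℝ) (x : ℝ) :
    ∀ (L : List (Fin N)) (A : Matrix (Fin d) (Fin d) ℂ),
    L.foldl (fun B i => B + ((x * p i : ℝ) : ℂ) • (Q i * B * Q i - B)) A
      = ∑ k ∈ Finset.range (L.length + 1), ((x : ℂ) ^ k) • T Q p k L A := by
  intro L
  induction L with
  | nil => intro A; simp [T_zero]
  | cons i L ih =>
    intro A
    rw [List.foldl_cons, ih]
    set n := L.length with hn
    set B := Q i * A * Q i - A with hB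
    have hstep : ∀ k, T Q p k L (A + ((x * p i : ℝ) : ℂ) • B)
        = T Q p k L A + ((x * p i : ℝ) : ℂ) • T Q p k L B :=
      fun k => T_addsmul Q p k L A B _
    simp_rw [hstep, smul_add, Finset.sum_add_distrib]
    have hS1 : ∑ k ∈ Finset.range (n+1), (x:ℂ)^k • T Q p k L A
        = T Q p 0 L A + ∑ k ∈ Finset.range (n+1), (x:ℂ)^(k+1) • T Q p (k+1) L A := by
      rw [Finset.sum_range_succ' (fun k => (x:ℂ)^k • T Q p k L A) n,
        Finset.sum_range_succ (fun k => (x:ℂ)^(k+1) • T Q p (k+1) L A) n,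
        T_gt Q p (n+1) L A (by omega)]
      simp [add_comm]
    have hS2 : ∑ k ∈ Finset.range (n+1), (x:ℂ)^k • (((x * p i : ℝ) : ℂ) • T Q p k L B)
        = ∑ k ∈ Finset.range (n+1), (x:ℂ)^(k+1) • ((p i : ℂ) • T Q p k L B) := by
      apply Finset.sum_congr rfl
      intro k _
      rw [smul_smul, smul_smul]
      congr 1
      push_cast
      ring
    rw [hS1, hS2]
    have hR : ∑ k ∈ Finset.range ((i :: L).length + 1), (x:ℂ)^k • T Q p k (i :: L) A
        = T Q p 0 L A + ∑ k ∈ Finset.range (n+1),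
            (x:ℂ)^(k+1) • (T Q p (k+1) L A + (p i : ℂ) • T Q p k L B) := by
      rw [List.length_cons]
      rw [Finset.sum_range_succ' (fun k => (x:ℂ)^k • T Q p k (i :: L) A) (n+1)]
      simp_rw [T_succ_cons Q p _ i L A, ← hB]
      simp [T_zero, add_comm]
    rw [hR]
    simp_rw [smul_add]
    rw [Finset.sum_add_distrib]
    abel

lemma abs_trace_mul_list_sum {α : Type*} (ρ : Matrix (Fin d) (Fin d) ℂ) (l : List α)
    (h : α → Matrix (Fin d) (Fin d) ℂ) (c : ℝ)
    (hc : ∀ a ∈ l, ‖(ρ * h a).trace‖ ≤ c) :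
    ‖(ρ * (l.map h).sum).trace‖ ≤ l.length * c := by
  induction l with
  | nil => simp
  | cons a l ih =>
    rw [List.map_cons, List.sum_cons, mul_add, Matrix.trace_add]
    calc ‖(ρ * h a).trace + (ρ * (l.map h).sum).trace‖
        ≤ ‖(ρ * h a).trace‖ + ‖(ρ * (l.map h).sum).trace‖ :=
          norm_add_le _ _
      _ ≤ c + l.length * c := add_le_add (hc a (List.mem_cons_self))
            (ih (fun b hb => hc b (List.mem_cons_of_mem a hb)))
      _ = (a :: l).length * c := by rw [List.length_cons]; push_cast; ring

lemma list_prod_abs_le (p : Fin N → ℝ) (pmax : ℝ) (hp0 : ∀ i, 0 ≤ p i)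
    (hub : ∀ i, p i ≤ pmax) (hpm : 0 ≤ pmax) :
    ∀ S : List (Fin N), |(S.map p).prod| ≤ pmax ^ S.length := by
  intro S
  induction S with
  | nil => simp
  | cons i S ih =>
    rw [List.map_cons, List.prod_cons, List.length_cons, abs_mul, pow_succ, mul_comm (pmax ^ S.length) pmax]
    exact mul_le_mul (by rw [abs_of_nonneg (hp0 i)]; exact hub i) ih (abs_nonneg _) hpm

end ZNEaux

lemma lagrange_sum' {K : ℕ} (g : Fin (K+1) → ℝ) (hg_inj : Function.Injective g)
    (β : Fin (K+1) → ℝ) (hβ : ∀ ℓ, β ℓ = ∏ m ∈ Finset.univ.erase ℓ, g m / (g m - g ℓ))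
    (k : ℕ) (hk : k ≤ K) : ∑ ℓ, β ℓ * g ℓ ^ k = (0:ℝ)^k := by
  have hvs : Set.InjOn g (Finset.univ : Finset (Fin (K+1))) := fun a _ b _ h => hg_inj h
  have hdeg : (Polynomial.X ^ k : Polynomial ℝ).degree < (Finset.univ : Finset (Fin (K+1))).card := by
    rw [Polynomial.degree_X_pow, Finset.card_univ, Fintype.card_fin]
    exact_mod_cast Nat.lt_succ_of_le hk
  have h := Lagrange.eq_interpolate hvs hdeg
  have h0 := congrArg (Polynomial.eval 0) h
  rw [Polynomial.eval_pow, Polynomial.eval_X] at h0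
  rw [Lagrange.interpolate_apply, Polynomial.eval_finset_sum] at h0
  rw [h0]
  apply Finset.sum_congr rfl
  intro ℓ _
  rw [Polynomial.eval_mul, Polynomial.eval_C, Lagrange.basis, Polynomial.eval_prod, hβ ℓ,
    Polynomial.eval_pow, Polynomial.eval_X, mul_comm]
  congr 1
  apply Finset.prod_congr rfl
  intro m _
  rw [Lagrange.basisDivisor, Polynomial.eval_mul, Polynomial.eval_C, Polynomial.eval_sub,
    Polynomial.eval_X, Polynomial.eval_C]
  rw [show g ℓ - g m = -(g m - g ℓ) by ring, inv_neg]
  field_simp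
  ring

/-- **Compact zero-noise extrapolation error bound.**
Let `Q 1, …, Q N` be Hermitian unitary `d×d` complex matrices, `p i ∈ [0,1]` with
`pmax = max_i p i`, `ρ` a density matrix, `O` with `‖O‖ ≤ 1`.  With
`f g = Tr(ρ (N_N^{(g)} ∘ ⋯ ∘ N_1^{(g)})(O))`, `K + 1 ≤ N`, pairwise distinct positive
nodes `g ℓ`, and Richardson weights `β ℓ = ∏_{m ≠ ℓ} g m / (g m − g ℓ)`, one has
`|∑ ℓ, β ℓ f (g ℓ) − Tr(ρ O)| ≤ ∑_{k=K+1}^{N} Γ_k (N choose k) (2 pmax)^k`, where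
`Γ_k = |∑ ℓ, β ℓ (g ℓ)^k|`. -/
theorem zne_compact_error_bound (d N K : ℕ) (hKN : K + 1 ≤ N)
    (Q : Fin N → Matrix (Fin d) (Fin d) ℂ)
    (hQ_herm : ∀ i, (Q i)ᴴ = Q i) (hQ_unit : ∀ i, Q i * Q i = 1)
    (p : Fin N → ℝ) (hp : ∀ i, p i ∈ Set.Icc (0 : ℝ) 1)
    (pmax : ℝ) (hpmax_ub : ∀ i, p i ≤ pmax) (hpmax_mem : ∃ i, p i = pmax)
    (ρ O : Matrix (Fin d) (Fin d) ℂ)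
    (hρ : ρ.PosSemidef) (hρ_tr : ρ.trace = 1) (hO : ‖O‖ ≤ 1)
    (g : Fin (K + 1) → ℝ) (hg_inj : Function.Injective g) (hg_pos : ∀ ℓ, 0 < g ℓ)
    (β : Fin (K + 1) → ℝ)
    (hβ : ∀ ℓ, β ℓ = ∏ m ∈ Finset.univ.erase ℓ, g m / (g m - g ℓ))
    (f : ℝ → ℂ)
    (hf : ∀ x : ℝ, f x = (ρ * (List.finRange N).foldl
        (fun A i => (1 - (x * p i : ℝ)) • A + ((x * p i : ℝ) : ℂ) • (Q i * A * Q i)) O).trace) :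
    ‖(∑ ℓ, (β ℓ : ℂ) * f (g ℓ)) - (ρ * O).trace‖
      ≤ ∑ k ∈ Finset.Icc (K + 1) N,
          |∑ ℓ, β ℓ * g ℓ ^ k| * (N.choose k : ℝ) * (2 * pmax) ^ k := by
  classical
  obtain ⟨i₀, hi₀⟩ := hpmax_mem
  have hpm : 0 ≤ pmax := hi₀ ▸ (hp i₀).1
  have hQn : ∀ i, ‖Q i‖ ≤ 1 := fun i =>
    ZNEaux.unitary_norm_le (Q i) (by rw [hQ_herm i]; exact hQ_unit i)
  set L : List (Fin N) := List.finRange N with hL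
  have hLlen : L.length = N := List.length_finRange
  -- rewrite the step function
  have hsmul : ∀ (r : ℝ) (B : Matrix (Fin d) (Fin d) ℂ), ((r : ℝ) : ℂ) • B = r • B := by
    intro r B
    rw [← Complex.coe_algebraMap]
    exact algebraMap_smul ℂ r B
  have hfun : ∀ x : ℝ, (fun (A : Matrix (Fin d) (Fin d) ℂ) (i : Fin N) =>
        (1 - (x * p i : ℝ)) • A + ((x * p i : ℝ) : ℂ) • (Q i * A * Q i))
      = fun B i => B + ((x * p i : ℝ) : ℂ) • (Q i * B * Q i - B) := by
    intro x
    funext B i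
    rw [← hsmul (1 - x * p i) B]
    have hc : (((1 - x * p i : ℝ)) : ℂ) = 1 - ((x * p i : ℝ) : ℂ) := by push_cast; ring
    rw [hc, sub_smul, one_smul, smul_sub]
    abel
  -- coefficients
  set c : ℕ → ℂ := fun k => (ρ * ZNEaux.T Q p k L O).trace with hc
  have hfc : ∀ x : ℝ, f x = ∑ k ∈ Finset.range (N + 1), (x:ℂ)^k * c k := by
    intro x
    rw [hf x, hfun x, ZNEaux.expand Q p x L O, hLlen, Finset.mul_sum]
    rw [Matrix.trace_sum]
    apply Finset.sum_congr rfl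
    intro k _
    rw [Matrix.mul_smul, Matrix.trace_smul, smul_eq_mul]
  have hc0 : c 0 = (ρ * O).trace := by rw [hc]; simp [ZNEaux.T_zero]
  -- swap sums
  have hsum : ∑ ℓ, (β ℓ : ℂ) * f (g ℓ)
      = ∑ k ∈ Finset.range (N + 1), ((∑ ℓ, β ℓ * g ℓ ^ k : ℝ) : ℂ) * c k := by
    simp_rw [hfc, Finset.mul_sum]
    rw [Finset.sum_comm]
    apply Finset.sum_congr rfl
    intro k _
    push_cast
    rw [Finset.sum_mul]
    apply Finset.sum_congr rfl
    intro ℓ _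
    ring
  -- split the range
  have hsplit : ∑ k ∈ Finset.range (N + 1), ((∑ ℓ, β ℓ * g ℓ ^ k : ℝ) : ℂ) * c k
      = (∑ k ∈ Finset.range (K + 1), ((∑ ℓ, β ℓ * g ℓ ^ k : ℝ) : ℂ) * c k)
        + ∑ k ∈ Finset.Icc (K + 1) N, ((∑ ℓ, β ℓ * g ℓ ^ k : ℝ) : ℂ) * c k := by
    rw [Finset.range_eq_Ico, ← Finset.sum_Ico_consecutive _ (Nat.zero_le (K+1)) (by omega),
      ← Finset.range_eq_Ico, Finset.Ico_add_one_right_eq_Icc]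
  have hlow : ∑ k ∈ Finset.range (K + 1), ((∑ ℓ, β ℓ * g ℓ ^ k : ℝ) : ℂ) * c k = c 0 := by
    rw [Finset.sum_eq_single 0]
    · rw [lagrange_sum' g hg_inj β hβ 0 (Nat.zero_le K)]
      simp
    · intro k _ hk0
      rw [lagrange_sum' g hg_inj β hβ k (by
        rename_i hkmem
        simp only [Finset.mem_range] at hkmem
        omega)]
      rw [zero_pow hk0]
      simp
    · intro h0
      exact absurd (Finset.mem_range.mpr (Nat.succ_pos K)) h0
  have hdiff : (∑ ℓ, (β ℓ : ℂ) * f (g ℓ)) - (ρ * O).trace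
      = ∑ k ∈ Finset.Icc (K + 1) N, ((∑ ℓ, β ℓ * g ℓ ^ k : ℝ) : ℂ) * c k := by
    rw [hsum, hsplit, hlow, hc0]
    ring
  rw [hdiff]
  -- coefficient bound
  have hcb : ∀ k, ‖c k‖ ≤ (N.choose k : ℝ) * (2 * pmax) ^ k := by
    intro k
    rw [hc]
    show ‖(ρ * ZNEaux.T Q p k L O).trace‖ ≤ _
    unfold ZNEaux.T
    have hterm : ∀ S ∈ List.sublistsLen k L,
        ‖(ρ * ((((S.map p).prod : ℝ) : ℂ) • ZNEaux.applyD Q S O)).trace‖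
          ≤ pmax ^ k * 2 ^ k := by
      intro S hS
      have hSlen : S.length = k := List.length_of_sublistsLen hS
      rw [Matrix.mul_smul, Matrix.trace_smul, smul_eq_mul, norm_mul, Complex.norm_real, Real.norm_eq_abs]
      have h1 : |(S.map p).prod| ≤ pmax ^ k := by
        rw [← hSlen]
        exact ZNEaux.list_prod_abs_le p pmax (fun i => (hp i).1) hpmax_ub hpm S
      have h2 : ‖(ρ * ZNEaux.applyD Q S O).trace‖ ≤ 2 ^ k := by
        calc ‖(ρ * ZNEaux.applyD Q S O).trace‖ ≤ ‖ZNEaux.applyD Q S O‖ :=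
              ZNEaux.trace_mul_abs_le ρ _ hρ hρ_tr
          _ ≤ 2 ^ S.length * ‖O‖ := ZNEaux.applyD_norm Q hQn S O
          _ ≤ 2 ^ k * 1 := by
              rw [hSlen]
              exact mul_le_mul_of_nonneg_left hO (by positivity)
          _ = 2 ^ k := mul_one _
      exact mul_le_mul h1 h2 (norm_nonneg _) (by positivity)
    calc ‖(ρ * ((List.sublistsLen k L).map
            (fun S => (((S.map p).prod : ℝ) : ℂ) • ZNEaux.applyD Q S O)).sum).trace‖
        ≤ (List.sublistsLen k L).length * (pmax ^ k * 2 ^ k) :=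
          ZNEaux.abs_trace_mul_list_sum ρ _ _ _ hterm
      _ = (N.choose k : ℝ) * (2 * pmax) ^ k := by
          rw [List.length_sublistsLen, hLlen, mul_pow]
          ring
  calc ‖∑ k ∈ Finset.Icc (K + 1) N, ((∑ ℓ, β ℓ * g ℓ ^ k : ℝ) : ℂ) * c k‖
      ≤ ∑ k ∈ Finset.Icc (K + 1) N, ‖((∑ ℓ, β ℓ * g ℓ ^ k : ℝ) : ℂ) * c k‖ := norm_sum_le _ _
    _ ≤ ∑ k ∈ Finset.Icc (K + 1) N, |∑ ℓ, β ℓ * g ℓ ^ k| * (N.choose k : ℝ) * (2 * pmax) ^ k := by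
        apply Finset.sum_le_sum
        intro k _
        rw [norm_mul, Complex.norm_real, Real.norm_eq_abs, mul_assoc]
        apply mul_le_mul_of_nonneg_left _ (abs_nonneg _)
        exact hcb k
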